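/- Let a₁,…,a₆ be complex numbers and let z ≠ 0 satisfy |z| < 1, |a₁a₂a₄a₅z| < 1, |a₁a₃a₄a₆z| < 1, |a₂a₃a₅a₆z| < 1, |a₁a₂a₃z| < 1, |a₁a₅a₆z| < 1, |a₂a₄a₆z| < 1, |a₃a₄a₅z| < 1. Let u denote the derivative at z of the function z ↦ 𝒰(a₁,…,a₆,z) (which exists under these hypotheses). Then exp(z·u) = N(a,z)/D(a,z), where N(a,z) = (1+a₁a₂a₃z)(1+a₁a₅a₆z)(1+a₂a₄a₆z)(1+a₃a₄a₅z) and D(a,z) = (1−z)(1−a₁a₂a₄a₅z)(1−a₁a₃a₄a₆z)(1−a₂a₃a₅a₆z). Consequently, exp(z·𝒰_z) = 1 holds at z if and only if q₂·z² + q₁·z + q₀ = 0, with q₀, q₁, q₂ as defined in the context. -/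

import Mathlib

open Complex

/-- The dilogarithm `Li₂(z) = ∑_{n ≥ 1} zⁿ/n²`, written as a sum over `n : ℕ`
via `Li₂(z) = ∑_{n ≥ 0} z^{n+1}/(n+1)²`. -/
noncomputable def Li2 (z : ℂ) : ℂ := ∑' n : ℕ, z ^ (n + 1) / ((n : ℂ) + 1) ^ 2

/-- The potential function `𝒰(a₁,…,a₆,z)` of a generalised hyperbolic
tetrahedron. -/
noncomputable def U (a₁ a₂ a₃ a₄ a₅ a₆ z : ℂ) : ℂ :=
  Li2 z + Li2 (a₁ * a₂ * a₄ * a₅ * z) + Li2 (a₁ * a₃ * a₄ * a₆ * z)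
    + Li2 (a₂ * a₃ * a₅ * a₆ * z)
    - Li2 (-(a₁ * a₂ * a₃ * z)) - Li2 (-(a₁ * a₅ * a₆ * z))
    - Li2 (-(a₂ * a₄ * a₆ * z)) - Li2 (-(a₃ * a₄ * a₅ * z))

/-- `q₀` for a generalised hyperbolic tetrahedron with parameters `a₁,…,a₆`. -/
noncomputable def q0 (a₁ a₂ a₃ a₄ a₅ a₆ : ℂ) : ℂ :=
  1 + a₁ * a₂ * a₃ + a₁ * a₅ * a₆ + a₂ * a₄ * a₆ + a₃ * a₄ * a₅
    + a₁ * a₂ * a₄ * a₅ + a₁ * a₃ * a₄ * a₆ + a₂ * a₃ * a₅ * a₆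

/-- `q₁` for a generalised hyperbolic tetrahedron with parameters `a₁,…,a₆`. -/
noncomputable def q1 (a₁ a₂ a₃ a₄ a₅ a₆ : ℂ) : ℂ :=
  -(a₁ * a₂ * a₃ * a₄ * a₅ * a₆) *
    ((a₁ - 1 / a₁) * (a₄ - 1 / a₄) + (a₂ - 1 / a₂) * (a₅ - 1 / a₅)
      + (a₃ - 1 / a₃) * (a₆ - 1 / a₆))

/-- `q₂` for a generalised hyperbolic tetrahedron with parameters `a₁,…,a₆`. -/
noncomputable def q2 (a₁ a₂ a₃ a₄ a₅ a₆ : ℂ) : ℂ :=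
  a₁ * a₂ * a₃ * a₄ * a₅ * a₆ *
    (a₁ * a₄ + a₂ * a₅ + a₃ * a₆ + a₁ * a₂ * a₆ + a₁ * a₃ * a₅ + a₂ * a₃ * a₄
      + a₄ * a₅ * a₆ + a₁ * a₂ * a₃ * a₄ * a₅ * a₆)

/-- The numerator `N(a,z)` of `e^{z·∂𝒰/∂z}`. -/
noncomputable def Npoly (a₁ a₂ a₃ a₄ a₅ a₆ z : ℂ) : ℂ :=
  (1 + a₁ * a₂ * a₃ * z) * (1 + a₁ * a₅ * a₆ * z) * (1 + a₂ * a₄ * a₆ * z)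
    * (1 + a₃ * a₄ * a₅ * z)

/-- The denominator `D(a,z)` of `e^{z·∂𝒰/∂z}`. -/
noncomputable def Dpoly (a₁ a₂ a₃ a₄ a₅ a₆ z : ℂ) : ℂ :=
  (1 - z) * (1 - a₁ * a₂ * a₄ * a₅ * z) * (1 - a₁ * a₃ * a₄ * a₆ * z)
    * (1 - a₂ * a₃ * a₅ * a₆ * z)

/-- If `u` is the derivative at `z` of `z ↦ 𝒰(a₁,…,a₆,z)`, then
`exp(z·u) = N(a,z)/D(a,z)`; consequently `exp(z·u) = 1` iff
`q₂·z² + q₁·z + q₀ = 0`. -/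
lemma hasDerivAt_Li2 {w : ℂ} (hw : ‖w‖ < 1) :
    HasDerivAt Li2 (∑' n : ℕ, w ^ n / ((n : ℂ) + 1)) w := by
  obtain ⟨r, hwr, hr1⟩ := exists_between hw
  have hr0 : 0 < r := lt_of_le_of_lt (norm_nonneg w) hwr
  have hmem : w ∈ Metric.ball (0 : ℂ) r := by
    simpa using hwr
  have h0mem : (0 : ℂ) ∈ Metric.ball (0 : ℂ) r := by simpa using hr0
  have key := hasDerivAt_tsum_of_isPreconnected
    (u := fun n : ℕ => r ^ n)
    (g := fun (n : ℕ) (y : ℂ) => y ^ (n + 1) / ((n : ℂ) + 1) ^ 2)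
    (g' := fun (n : ℕ) (y : ℂ) => y ^ n / ((n : ℂ) + 1))
    (summable_geometric_of_lt_one hr0.le hr1)
    Metric.isOpen_ball (convex_ball (0:ℂ) r).isPreconnected
    (fun n y _ => ?_) (fun n y hy => ?_) h0mem ?_ hmem
  · exact key
  · -- derivative of each term
    have h := (hasDerivAt_pow (n + 1) y).div_const (((n : ℂ) + 1) ^ 2)
    refine h.congr_deriv ?_
    have hne : ((n : ℂ) + 1) ≠ 0 := Nat.cast_add_one_ne_zero n
    push_cast
    field_simp
  · -- bound
    have hy' : ‖y‖ < r := by simpa using hy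
    have h1 : (1 : ℝ) ≤ ‖((n : ℂ) + 1)‖ := by
      have : ((n : ℂ) + 1) = ((n + 1 : ℕ) : ℂ) := by push_cast; ring
      rw [this, Complex.norm_natCast]
      push_cast
      linarith [(Nat.cast_nonneg n : (0:ℝ) ≤ (n:ℝ))]
    calc ‖y ^ n / ((n : ℂ) + 1)‖ = ‖y‖ ^ n / ‖((n : ℂ) + 1)‖ := by
            rw [norm_div, norm_pow]
      _ ≤ ‖y‖ ^ n := div_le_self (pow_nonneg (norm_nonneg y) n) h1
      _ ≤ r ^ n := pow_le_pow_left₀ (norm_nonneg y)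
            (by simpa using hy'.le) n
  · -- summable at 0
    have : (fun n : ℕ => (0 : ℂ) ^ (n + 1) / ((n : ℂ) + 1) ^ 2) = fun _ => 0 := by
      funext n; simp
    rw [this]; exact summable_zero

lemma key_log {w : ℂ} (hw : ‖w‖ < 1) :
    w * (∑' n : ℕ, w ^ n / ((n : ℂ) + 1)) = -Complex.log (1 - w) := by
  have hw' : ‖w‖ < 1 := by simpa using hw
  have hs : Summable (fun n : ℕ => w ^ n / ((n : ℂ) + 1)) := by
    apply Summable.of_norm_bounded (summable_geometric_of_lt_one (norm_nonneg w) hw')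
    intro n
    have h1 : (1 : ℝ) ≤ ‖((n : ℂ) + 1)‖ := by
      have : ((n : ℂ) + 1) = ((n + 1 : ℕ) : ℂ) := by push_cast; ring
      rw [this, Complex.norm_natCast]
      push_cast
      linarith [(Nat.cast_nonneg n : (0:ℝ) ≤ (n:ℝ))]
    calc ‖w ^ n / ((n : ℂ) + 1)‖ = ‖w‖ ^ n / ‖((n : ℂ) + 1)‖ := by rw [norm_div, norm_pow]
      _ ≤ ‖w‖ ^ n := div_le_self (pow_nonneg (norm_nonneg w) n) h1
  have h1 := Complex.hasSum_taylorSeries_neg_log hw'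
  have h2 := (hasSum_nat_add_iff' (f := fun n : ℕ => w ^ n / (n : ℂ)) 1).mpr h1
  have h3 : HasSum (fun n : ℕ => w ^ (n + 1) / ((n : ℂ) + 1)) (-Complex.log (1 - w)) := by
    simpa using h2
  have h4 := hs.hasSum.mul_left w
  have h5 : (fun n : ℕ => w * (w ^ n / ((n : ℂ) + 1)))
      = fun n : ℕ => w ^ (n + 1) / ((n : ℂ) + 1) := by
    funext n; rw [pow_succ]; ring
  rw [h5] at h4
  exact h4.unique h3

lemma hasDerivAt_Li2_comp (c : ℂ) {z : ℂ} (hz : z ≠ 0) (h : ‖c * z‖ < 1) :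
    HasDerivAt (fun w => Li2 (c * w)) (-Complex.log (1 - c * z) / z) z := by
  have h1 := hasDerivAt_Li2 h
  have h2 : HasDerivAt (fun w : ℂ => c * w) c z := by
    simpa using (hasDerivAt_id z).const_mul c
  have h3 := h1.comp z h2
  have h4 : (∑' n : ℕ, (c * z) ^ n / ((n : ℂ) + 1)) * c = -Complex.log (1 - c * z) / z := by
    rw [eq_div_iff hz]
    calc (∑' n : ℕ, (c * z) ^ n / ((n : ℂ) + 1)) * c * z
        = (c * z) * (∑' n : ℕ, (c * z) ^ n / ((n : ℂ) + 1)) := by ring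
      _ = -Complex.log (1 - c * z) := key_log h
  rw [h4] at h3
  exact h3

lemma one_sub_ne {w : ℂ} (h : ‖w‖ < 1) : 1 - w ≠ 0 := by
  intro h0
  have : w = 1 := by linear_combination -h0
  rw [this] at h
  simp at h

theorem exp_z_mul_deriv_potential
    (a₁ a₂ a₃ a₄ a₅ a₆ z u : ℂ)
    (h₁ : a₁ ≠ 0) (h₂ : a₂ ≠ 0) (h₃ : a₃ ≠ 0) (h₄ : a₄ ≠ 0)
    (h₅ : a₅ ≠ 0) (h₆ : a₆ ≠ 0) (hz₀ : z ≠ 0)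
    (hm₀ : ‖z‖ < 1)
    (hm₁ : ‖a₁ * a₂ * a₄ * a₅ * z‖ < 1)
    (hm₂ : ‖a₁ * a₃ * a₄ * a₆ * z‖ < 1)
    (hm₃ : ‖a₂ * a₃ * a₅ * a₆ * z‖ < 1)
    (hm₄ : ‖a₁ * a₂ * a₃ * z‖ < 1)
    (hm₅ : ‖a₁ * a₅ * a₆ * z‖ < 1)
    (hm₆ : ‖a₂ * a₄ * a₆ * z‖ < 1)
    (hm₇ : ‖a₃ * a₄ * a₅ * z‖ < 1)
    (hu : HasDerivAt (fun w => U a₁ a₂ a₃ a₄ a₅ a₆ w) u z) :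
    Complex.exp (z * u)
        = Npoly a₁ a₂ a₃ a₄ a₅ a₆ z / Dpoly a₁ a₂ a₃ a₄ a₅ a₆ z ∧
      (Complex.exp (z * u) = 1 ↔
        q2 a₁ a₂ a₃ a₄ a₅ a₆ * z ^ 2 + q1 a₁ a₂ a₃ a₄ a₅ a₆ * z
          + q0 a₁ a₂ a₃ a₄ a₅ a₆ = 0) := by
  -- derivative of the first term
  have H0 : HasDerivAt Li2 (-Complex.log (1 - z) / z) z := by
    have h1 := hasDerivAt_Li2 hm₀
    have h4 : (∑' n : ℕ, z ^ n / ((n : ℂ) + 1)) = -Complex.log (1 - z) / z := by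
      rw [eq_div_iff hz₀, mul_comm]
      exact key_log hm₀
    rwa [h4] at h1
  have H1 := hasDerivAt_Li2_comp (a₁ * a₂ * a₄ * a₅) hz₀ hm₁
  have H2 := hasDerivAt_Li2_comp (a₁ * a₃ * a₄ * a₆) hz₀ hm₂
  have H3 := hasDerivAt_Li2_comp (a₂ * a₃ * a₅ * a₆) hz₀ hm₃
  have negcomp : ∀ c : ℂ, ‖c * z‖ < 1 →
      HasDerivAt (fun w => Li2 (-(c * w))) (-Complex.log (1 + c * z) / z) z := by
    intro c hc
    have habs : ‖-c * z‖ < 1 := by simpa [neg_mul] using hc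
    have h := hasDerivAt_Li2_comp (-c) hz₀ habs
    simpa only [neg_mul, sub_neg_eq_add] using h
  have H4 := negcomp (a₁ * a₂ * a₃) hm₄
  have H5 := negcomp (a₁ * a₅ * a₆) hm₅
  have H6 := negcomp (a₂ * a₄ * a₆) hm₆
  have H7 := negcomp (a₃ * a₄ * a₅) hm₇
  have HU : HasDerivAt (fun w => U a₁ a₂ a₃ a₄ a₅ a₆ w)
      (-Complex.log (1 - z) / z
        + -Complex.log (1 - a₁ * a₂ * a₄ * a₅ * z) / z
        + -Complex.log (1 - a₁ * a₃ * a₄ * a₆ * z) / z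
        + -Complex.log (1 - a₂ * a₃ * a₅ * a₆ * z) / z
        - -Complex.log (1 + a₁ * a₂ * a₃ * z) / z
        - -Complex.log (1 + a₁ * a₅ * a₆ * z) / z
        - -Complex.log (1 + a₂ * a₄ * a₆ * z) / z
        - -Complex.log (1 + a₃ * a₄ * a₅ * z) / z) z := by
    simp only [U]
    exact ((((((H0.add H1).add H2).add H3).sub H4).sub H5).sub H6).sub H7
  have huv := hu.unique HU
  have hzu : z * u
      = (Complex.log (1 + a₁ * a₂ * a₃ * z) + Complex.log (1 + a₁ * a₅ * a₆ * z)
          + Complex.log (1 + a₂ * a₄ * a₆ * z) + Complex.log (1 + a₃ * a₄ * a₅ * z))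
        - (Complex.log (1 - z) + Complex.log (1 - a₁ * a₂ * a₄ * a₅ * z)
          + Complex.log (1 - a₁ * a₃ * a₄ * a₆ * z) + Complex.log (1 - a₂ * a₃ * a₅ * a₆ * z)) := by
    rw [huv, mul_sub, mul_sub, mul_sub, mul_sub, mul_add, mul_add, mul_add]
    simp only [mul_div_assoc', mul_div_cancel_left₀ _ hz₀]
    ring
  have hn₄ : (1 : ℂ) + a₁ * a₂ * a₃ * z ≠ 0 := by
    have := one_sub_ne (w := -(a₁ * a₂ * a₃ * z)) (by simpa using hm₄)
    simpa [sub_neg_eq_add] using this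
  have hn₅ : (1 : ℂ) + a₁ * a₅ * a₆ * z ≠ 0 := by
    have := one_sub_ne (w := -(a₁ * a₅ * a₆ * z)) (by simpa using hm₅)
    simpa [sub_neg_eq_add] using this
  have hn₆ : (1 : ℂ) + a₂ * a₄ * a₆ * z ≠ 0 := by
    have := one_sub_ne (w := -(a₂ * a₄ * a₆ * z)) (by simpa using hm₆)
    simpa [sub_neg_eq_add] using this
  have hn₇ : (1 : ℂ) + a₃ * a₄ * a₅ * z ≠ 0 := by
    have := one_sub_ne (w := -(a₃ * a₄ * a₅ * z)) (by simpa using hm₇)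
    simpa [sub_neg_eq_add] using this
  have hd₀ : (1 : ℂ) - z ≠ 0 := one_sub_ne hm₀
  have hd₁ : (1 : ℂ) - a₁ * a₂ * a₄ * a₅ * z ≠ 0 := one_sub_ne hm₁
  have hd₂ : (1 : ℂ) - a₁ * a₃ * a₄ * a₆ * z ≠ 0 := one_sub_ne hm₂
  have hd₃ : (1 : ℂ) - a₂ * a₃ * a₅ * a₆ * z ≠ 0 := one_sub_ne hm₃
  have hexp : Complex.exp (z * u)
      = Npoly a₁ a₂ a₃ a₄ a₅ a₆ z / Dpoly a₁ a₂ a₃ a₄ a₅ a₆ z := by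
    rw [hzu, Complex.exp_sub, Complex.exp_add, Complex.exp_add, Complex.exp_add,
      Complex.exp_add, Complex.exp_add, Complex.exp_add,
      Complex.exp_log hn₄, Complex.exp_log hn₅, Complex.exp_log hn₆, Complex.exp_log hn₇,
      Complex.exp_log hd₀, Complex.exp_log hd₁, Complex.exp_log hd₂, Complex.exp_log hd₃]
    simp only [Npoly, Dpoly]
  have hD : Dpoly a₁ a₂ a₃ a₄ a₅ a₆ z ≠ 0 := by
    simp only [Dpoly]
    exact mul_ne_zero (mul_ne_zero (mul_ne_zero hd₀ hd₁) hd₂) hd₃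
  have hid : Npoly a₁ a₂ a₃ a₄ a₅ a₆ z - Dpoly a₁ a₂ a₃ a₄ a₅ a₆ z
      = z * (q2 a₁ a₂ a₃ a₄ a₅ a₆ * z ^ 2 + q1 a₁ a₂ a₃ a₄ a₅ a₆ * z
          + q0 a₁ a₂ a₃ a₄ a₅ a₆) := by
    simp only [Npoly, Dpoly, q0, q1, q2]
    field_simp
    ring
  refine ⟨hexp, ?_⟩
  rw [hexp, div_eq_one_iff_eq hD]
  constructor
  · intro h
    have h' : z * (q2 a₁ a₂ a₃ a₄ a₅ a₆ * z ^ 2 + q1 a₁ a₂ a₃ a₄ a₅ a₆ * z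
        + q0 a₁ a₂ a₃ a₄ a₅ a₆) = 0 := by
      rw [← hid, h, sub_self]
    exact (mul_eq_zero.mp h').resolve_left hz₀
  · intro h
    have h' : Npoly a₁ a₂ a₃ a₄ a₅ a₆ z - Dpoly a₁ a₂ a₃ a₄ a₅ a₆ z = 0 := by
      rw [hid, h, mul_zero]
    exact sub_eq_zero.mp h'
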